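/- Let $(S_k)$ be a random walk with $S_0=0$, let $\tau=\min\{k\geq1: S_k<0\}$, and let $V(x)=\sum_{k=0}^\infty \mathbb{P}(H_k\leq x)$ be the renewal function of the strict ascending ladder heights $(H_k)$ of $-S$. Then for every $x\geq0$, $\liminf_{n\to\infty} \mathbb{P}_x(\tau>n)/\mathbb{P}_0(\tau>n) \geq V(x)$, where $\mathbb{P}_x$ denotes the law of the walk started at $x$. -/

import Mathlib

open MeasureTheory ProbabilityTheory Filter

open MeasureTheory ProbabilityTheory Filter Set

noncomputable section
namespace RWren

/-! ### Path-space helpers -/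

/-- partial sums of a path -/
def psum (y : ℕ → ℝ) (r : ℕ) : ℝ := ∑ i ∈ Finset.range r, y i

lemma measurable_psum (r : ℕ) : Measurable (fun y : ℕ → ℝ => psum y r) :=
  Finset.measurable_sum _ (fun i _ => measurable_pi_apply i)

lemma psum_congr {y z : ℕ → ℝ} {r : ℕ} (h : ∀ i < r, y i = z i) : psum y r = psum z r :=
  Finset.sum_congr rfl fun i hi => h i (Finset.mem_range.1 hi)

lemma ncard_eq_card_filter (t : ℕ) (p : ℕ → Prop) [DecidablePred p] :
    Set.ncard {s : ℕ | 1 ≤ s ∧ s ≤ t ∧ p s} = ((Finset.Icc 1 t).filter p).card := by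
  rw [← Set.ncard_coe_finset]
  congr 1
  ext s
  simp [Finset.mem_Icc, and_assoc]

lemma ncard_eq_iff_sum (t k : ℕ) (p : ℕ → Prop) [DecidablePred p] :
    Set.ncard {s : ℕ | 1 ≤ s ∧ s ≤ t ∧ p s} = k ↔
      (∑ s ∈ Finset.Icc 1 t, if p s then (1:ℝ) else 0) = (k : ℝ) := by
  rw [ncard_eq_card_filter, ← Nat.cast_inj (R := ℝ)]
  congr! 1
  rw [Finset.card_filter]
  push_cast
  rfl

lemma measurable_ladpred (t : ℕ) :
    MeasurableSet {y : ℕ → ℝ | ∀ i < t, psum y t < psum y i} := by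
  have : {y : ℕ → ℝ | ∀ i < t, psum y t < psum y i} =
      ⋂ i, ⋂ (_ : i < t), {y | psum y t < psum y i} := by ext y; simp
  rw [this]
  exact MeasurableSet.iInter fun i => MeasurableSet.iInter fun _ =>
    measurableSet_lt (measurable_psum t) (measurable_psum i)

lemma measurable_cnt (t : ℕ) :
    Measurable (fun y : ℕ → ℝ =>
      ∑ s ∈ Finset.Icc 1 t, if (∀ i < s, psum y s < psum y i) then (1:ℝ) else 0) := by
  refine Finset.measurable_sum _ (fun s _ => ?_)
  exact Measurable.ite (measurable_ladpred s) measurable_const measurable_const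

/-- The ladder-point event on path space. -/
def DA (t k : ℕ) (x : ℝ) : Set (ℕ → ℝ) :=
  {y : ℕ → ℝ | (1 ≤ t ∧ ∀ i < t, psum y t < psum y i) ∧
      Set.ncard {s : ℕ | 1 ≤ s ∧ s ≤ t ∧ ∀ i < s, psum y s < psum y i} = k + 1 ∧
      -(psum y t) ≤ x}

lemma measurable_DA (t k : ℕ) (x : ℝ) : MeasurableSet (DA t k x) := by
  classical
  have h1 : MeasurableSet {y : ℕ → ℝ | 1 ≤ t ∧ ∀ i < t, psum y t < psum y i} := by
    rcases Nat.eq_zero_or_pos t with h | h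
    · simp [h]
    · have ht : 1 ≤ t := h
      have : {y : ℕ → ℝ | 1 ≤ t ∧ ∀ i < t, psum y t < psum y i}
          = {y : ℕ → ℝ | ∀ i < t, psum y t < psum y i} := by
        ext y; simp [ht]
      rw [this]; exact measurable_ladpred t
  have h2 : MeasurableSet {y : ℕ → ℝ |
      Set.ncard {s : ℕ | 1 ≤ s ∧ s ≤ t ∧ ∀ i < s, psum y s < psum y i} = k + 1} := by
    have : {y : ℕ → ℝ |
        Set.ncard {s : ℕ | 1 ≤ s ∧ s ≤ t ∧ ∀ i < s, psum y s < psum y i} = k + 1}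
        = (fun y : ℕ → ℝ =>
            ∑ s ∈ Finset.Icc 1 t, if (∀ i < s, psum y s < psum y i) then (1:ℝ) else 0) ⁻¹'
          {((k+1 : ℕ) : ℝ)} := by
      ext y
      simp only [Set.mem_setOf_eq, Set.mem_preimage, Set.mem_singleton_iff]
      exact ncard_eq_iff_sum t (k+1) _
    rw [this]
    exact (measurable_cnt t) (measurableSet_singleton _)
  have h3 : MeasurableSet {y : ℕ → ℝ | -(psum y t) ≤ x} :=
    measurableSet_le (measurable_psum t).neg measurable_const
  exact (h1.inter (h2.inter h3) : _)

lemma DA_congr {t k : ℕ} {x : ℝ} {y z : ℕ → ℝ} (h : ∀ i < t, y i = z i) :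
    y ∈ DA t k x ↔ z ∈ DA t k x := by
  have hps : ∀ r ≤ t, psum y r = psum z r := fun r hr =>
    psum_congr (fun i hi => h i (lt_of_lt_of_le hi hr))
  have hset : {s : ℕ | 1 ≤ s ∧ s ≤ t ∧ ∀ i < s, psum y s < psum y i}
      = {s : ℕ | 1 ≤ s ∧ s ≤ t ∧ ∀ i < s, psum z s < psum z i} := by
    ext s
    simp only [Set.mem_setOf_eq, and_congr_right_iff]
    intro _ hst
    constructor <;> intro hh i hi
    · rw [← hps s hst, ← hps i (le_of_lt (lt_of_lt_of_le hi hst))]; exact hh i hi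
    · rw [hps s hst, hps i (le_of_lt (lt_of_lt_of_le hi hst))]; exact hh i hi
  constructor <;> rintro ⟨⟨h1, h2⟩, h3, h4⟩
  · refine ⟨⟨h1, fun i hi => ?_⟩, ?_, ?_⟩
    · rw [← hps t le_rfl, ← hps i (le_of_lt hi)]; exact h2 i hi
    · rw [← hset]; exact h3
    · rw [← hps t le_rfl]; exact h4
  · refine ⟨⟨h1, fun i hi => ?_⟩, ?_, ?_⟩
    · rw [hps t le_rfl, hps i (le_of_lt hi)]; exact h2 i hi
    · rw [hset]; exact h3
    · rw [hps t le_rfl]; exact h4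

lemma mem_DA_iff {t k : ℕ} {x : ℝ} {y : ℕ → ℝ} {T : ℕ → ℝ} (h : ∀ r ≤ t, psum y r = T r) :
    y ∈ DA t k x ↔ ((1 ≤ t ∧ ∀ i < t, T t < T i) ∧
      Set.ncard {s : ℕ | 1 ≤ s ∧ s ≤ t ∧ ∀ i < s, T s < T i} = k + 1 ∧ -(T t) ≤ x) := by
  have hset : {s : ℕ | 1 ≤ s ∧ s ≤ t ∧ ∀ i < s, psum y s < psum y i}
      = {s : ℕ | 1 ≤ s ∧ s ≤ t ∧ ∀ i < s, T s < T i} := by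
    ext s
    simp only [Set.mem_setOf_eq, and_congr_right_iff]
    intro _ hst
    constructor <;> intro hh i hi
    · rw [← h s hst, ← h i (le_of_lt (lt_of_lt_of_le hi hst))]; exact hh i hi
    · rw [h s hst, h i (le_of_lt (lt_of_lt_of_le hi hst))]; exact hh i hi
  constructor <;> rintro ⟨⟨h1, h2⟩, h3, h4⟩
  · refine ⟨⟨h1, fun i hi => ?_⟩, ?_, ?_⟩
    · rw [← h t le_rfl, ← h i (le_of_lt hi)]; exact h2 i hi
    · rw [← hset]; exact h3
    · rw [← h t le_rfl]; exact h4
  · refine ⟨⟨h1, fun i hi => ?_⟩, ?_, ?_⟩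
    · rw [h t le_rfl, h i (le_of_lt hi)]; exact h2 i hi
    · rw [hset]; exact h3
    · rw [h t le_rfl]; exact h4

/-- Staying-above event on path space, with starting point `x`. -/
def DB (x : ℝ) (n : ℕ) : Set (ℕ → ℝ) := {y : ℕ → ℝ | ∀ j ≤ n, 0 ≤ x + psum y j}

lemma measurable_DB (x : ℝ) (n : ℕ) : MeasurableSet (DB x n) := by
  have : DB x n = ⋂ j, ⋂ (_ : j ≤ n), {y | 0 ≤ x + psum y j} := by ext y; simp [DB]
  rw [this]
  exact MeasurableSet.iInter fun j => MeasurableSet.iInter fun _ =>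
    measurableSet_le measurable_const (measurable_const.add (measurable_psum j))

lemma mem_DB_iff {x : ℝ} {n : ℕ} {y : ℕ → ℝ} {T : ℕ → ℝ} (h : ∀ r ≤ n, psum y r = T r) :
    y ∈ DB x n ↔ ∀ j ≤ n, 0 ≤ x + T j := by
  constructor <;> intro hh j hj
  · rw [← h j hj]; exact hh j hj
  · rw [h j hj]; exact hh j hj

/-- Initial nonnegative excursion ending above `x`. -/
def DC (N : ℕ) (x : ℝ) : Set (ℕ → ℝ) :=
  {y : ℕ → ℝ | (∀ j ≤ N, 0 ≤ psum y j) ∧ x ≤ psum y N}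

lemma measurable_DC (N : ℕ) (x : ℝ) : MeasurableSet (DC N x) := by
  have : DC N x = (⋂ j, ⋂ (_ : j ≤ N), {y | 0 ≤ psum y j}) ∩ {y | x ≤ psum y N} := by
    ext y; simp [DC]
  rw [this]
  exact (MeasurableSet.iInter fun j => MeasurableSet.iInter fun _ =>
    measurableSet_le measurable_const (measurable_psum j)).inter
    (measurableSet_le measurable_const (measurable_psum N))

lemma mem_DC_iff {N : ℕ} {x : ℝ} {y : ℕ → ℝ} {T : ℕ → ℝ} (h : ∀ r ≤ N, psum y r = T r) :
    y ∈ DC N x ↔ (∀ j ≤ N, 0 ≤ T j) ∧ x ≤ T N := by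
  constructor <;> rintro ⟨h1, h2⟩
  · exact ⟨fun j hj => (h j hj) ▸ h1 j hj, (h N le_rfl) ▸ h2⟩
  · exact ⟨fun j hj => (h j hj) ▸ h1 j hj, (h N le_rfl) ▸ h2⟩

/-! ### Probabilistic helpers -/

variable {Ω : Type*} [MeasurableSpace Ω] {P : Measure Ω} [IsProbabilityMeasure P]
  {X : ℕ → Ω → ℝ}

lemma measurable_ext_fin (n : ℕ) :
    Measurable (fun (y : Fin n → ℝ) (j : ℕ) => if h : j < n then y ⟨j, h⟩ else 0) := by
  refine measurable_pi_lambda _ (fun j => ?_)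
  by_cases h : j < n
  · simp only [h, dif_pos]; exact measurable_pi_apply _
  · simp only [h, dif_neg, not_false_iff]; exact measurable_const

lemma measurable_ext_finset (s : Finset ℕ) (e : ℕ → ℕ) :
    Measurable (fun (y : {i // i ∈ s} → ℝ) (j : ℕ) => if h : e j ∈ s then y ⟨e j, h⟩ else 0) := by
  refine measurable_pi_lambda _ (fun j => ?_)
  by_cases h : e j ∈ s
  · simp only [h, dif_pos]; exact measurable_pi_apply _
  · simp only [h, dif_neg, not_false_iff]; exact measurable_const

lemma measurable_truncX (hmeas : ∀ i, Measurable (X i)) (t : ℕ) :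
    Measurable (fun ω (j : ℕ) => if j < t then X j ω else 0) := by
  refine measurable_pi_lambda _ (fun j => ?_)
  by_cases h : j < t
  · simp only [h, if_pos]; exact hmeas j
  · simp only [h, if_neg, not_false_iff]; exact measurable_const

lemma measurable_shiftX (hmeas : ∀ i, Measurable (X i)) (t n : ℕ) :
    Measurable (fun ω (j : ℕ) => if j < n then X (t + j) ω else 0) := by
  refine measurable_pi_lambda _ (fun j => ?_)
  by_cases h : j < n
  · simp only [h, if_pos]; exact hmeas (t + j)
  · simp only [h, if_neg, not_false_iff]; exact measurable_const

/-- Law of a shifted window of an iid sequence is the product law. -/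
lemma law_shift (hmeas : ∀ i, Measurable (X i))
    (hindep : iIndepFun X P)
    (hid : ∀ i, Measure.map (X i) P = Measure.map (X 0) P) (t n : ℕ) :
    P.map (fun ω (i : Fin n) => X (t + (i : ℕ)) ω)
      = Measure.pi (fun _ : Fin n => P.map (X 0)) := by
  have hΦ : Measurable (fun ω (i : Fin n) => X (t + (i : ℕ)) ω) :=
    measurable_pi_lambda _ (fun i => hmeas _)
  refine (Measure.pi_eq fun s hs => ?_).symm
  rw [Measure.map_apply hΦ (MeasurableSet.univ_pi hs)]
  set sets : ℕ → Set ℝ := fun j => if h : j - t < n then s ⟨j - t, h⟩ else univ with hsets_def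
  have hsets : ∀ i : Fin n, sets (t + (i : ℕ)) = s i := by
    intro i
    have hlt : t + (i : ℕ) - t < n := by omega
    have hi : (⟨t + (i : ℕ) - t, hlt⟩ : Fin n) = i := Fin.ext (by simp)
    simp only [hsets_def]
    rw [dif_pos hlt, hi]
  have hmsets : ∀ j, MeasurableSet (sets j) := by
    intro j
    by_cases h : j - t < n
    · simp only [hsets_def, dif_pos h]; exact hs _
    · simp only [hsets_def, dif_neg h]; exact MeasurableSet.univ
  have hpre : (fun ω (i : Fin n) => X (t + (i : ℕ)) ω) ⁻¹' (univ.pi s)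
      = ⋂ j ∈ Finset.Ico t (t + n), X j ⁻¹' sets j := by
    ext ω
    simp only [mem_preimage, mem_univ_pi, Set.mem_iInter, Finset.mem_Ico]
    constructor
    · intro h j hj
      obtain ⟨i, rfl⟩ : ∃ i : Fin n, j = t + (i : ℕ) := ⟨⟨j - t, by omega⟩, by simp; omega⟩
      rw [hsets i]
      exact h i
    · intro h i
      have := h (t + (i : ℕ)) ⟨by omega, by omega⟩
      rwa [hsets i] at this
  rw [hpre, hindep.measure_inter_preimage_eq_mul (Finset.Ico t (t + n))
    (fun j _ => hmsets j)]
  have h1 : ∀ j ∈ Finset.Ico t (t + n), P (X j ⁻¹' sets j) = (P.map (X 0)) (sets j) := by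
    intro j _
    rw [← hid j, Measure.map_apply (hmeas j) (hmsets j)]
  rw [Finset.prod_congr rfl h1, Finset.prod_Ico_eq_prod_range]
  have h2 : t + n - t = n := by omega
  rw [h2, ← Fin.prod_univ_eq_prod_range (fun i => (P.map (X 0)) (sets (t + i))) n]
  exact Finset.prod_congr rfl (fun i _ => by rw [hsets i])

/-- Probability of a window event does not depend on the time shift. -/
lemma prob_shift (hmeas : ∀ i, Measurable (X i))
    (hindep : iIndepFun X P)
    (hid : ∀ i, Measure.map (X i) P = Measure.map (X 0) P)
    {D : Set (ℕ → ℝ)} (hD : MeasurableSet D) (t n : ℕ) :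
    P ((fun ω (j : ℕ) => if j < n then X (t + j) ω else 0) ⁻¹' D)
      = P ((fun ω (j : ℕ) => if j < n then X (0 + j) ω else 0) ⁻¹' D) := by
  have key : ∀ t', (fun ω (j : ℕ) => if j < n then X (t' + j) ω else 0)
      = (fun (y : Fin n → ℝ) (j : ℕ) => if h : j < n then y ⟨j, h⟩ else 0)
        ∘ (fun ω (i : Fin n) => X (t' + (i : ℕ)) ω) := by
    intro t'
    funext ω
    funext j
    by_cases h : j < n <;> simp [Function.comp, h]
  have hΦ : ∀ t', Measurable (fun ω (i : Fin n) => X (t' + (i : ℕ)) ω) :=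
    fun t' => measurable_pi_lambda _ (fun i => hmeas _)
  have hExt := measurable_ext_fin n
  rw [key t, key 0, Set.preimage_comp, Set.preimage_comp,
    ← Measure.map_apply (hΦ t) (hExt hD), ← Measure.map_apply (hΦ 0) (hExt hD),
    law_shift hmeas hindep hid t n, law_shift hmeas hindep hid 0 n]

/-- Truncated initial segment is independent of truncated shifted window. -/
lemma indep_trunc (hmeas : ∀ i, Measurable (X i))
    (hindep : iIndepFun X P) (t n : ℕ) :
    IndepFun (fun ω (j : ℕ) => if j < t then X j ω else 0)
      (fun ω (j : ℕ) => if j < n then X (t + j) ω else 0) P := by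
  have hdisj : Disjoint (Finset.range t) (Finset.Ico t (t + n)) := by
    rw [Finset.disjoint_left]
    intro a ha hb
    rw [Finset.mem_range] at ha
    rw [Finset.mem_Ico] at hb
    omega
  have h := hindep.indepFun_finset (Finset.range t) (Finset.Ico t (t + n)) hdisj hmeas
  have h2 := h.comp (measurable_ext_finset (Finset.range t) id)
    (measurable_ext_finset (Finset.Ico t (t + n)) (fun j => t + j))
  convert h2 using 1
  · funext ω
    funext j
    by_cases hj : j < t
    · simp [Function.comp, hj, Finset.mem_range]
    · simp [Function.comp, hj, Finset.mem_range]
  · funext ω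
    funext j
    by_cases hj : j < n
    · have : t + j ∈ Finset.Ico t (t + n) := by rw [Finset.mem_Ico]; omega
      simp [Function.comp, hj, this]
    · have : t + j ∉ Finset.Ico t (t + n) := by rw [Finset.mem_Ico]; omega
      simp [Function.comp, hj, this]

end RWren

open Topology in
open RWren in
/-- Lemma on the ratio of survival probabilities: for a centered random walk `S`, with
`τ = min {k ≥ 1 : S k < 0}` and `V` the renewal function of the strict ascending ladder
heights `H_k` of `-S`, one has `liminf_n P_x(τ > n) / P_0(τ > n) ≥ V x` for all `x ≥ 0`.
Here `t` is a strict ascending ladder time of `-S` iff `t ≥ 1` and `S t < S i` for all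
`i < t`; the event `{H_k ≤ x}` (with `T_k < ∞`) is that there is a ladder time `t` which is
the `k`-th one and `-S t ≤ x`; and `V x = ∑_{k≥0} P(H_k ≤ x) = 1 + ∑_{k≥1} P(H_k ≤ x)`
since `H_0 = 0 ≤ x`. `P_x(τ > n)` is the probability that the walk started from `x`
stays nonnegative up to time `n`. -/
theorem liminf_ratio_ge_renewal_function
    {Ω : Type*} [MeasurableSpace Ω] (P : Measure Ω) [IsProbabilityMeasure P]
    (X : ℕ → Ω → ℝ) (hmeas : ∀ i, Measurable (X i))
    (hindep : iIndepFun X P)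
    (hid : ∀ i, Measure.map (X i) P = Measure.map (X 0) P)
    (hint : Integrable (X 0) P) (hmean : ∫ ω, X 0 ω ∂P = 0)
    (S : ℕ → Ω → ℝ) (hS : ∀ n ω, S n ω = ∑ i ∈ Finset.range n, X i ω)
    (V : ℝ → ℝ)
    (hV : ∀ x, V x = 1 + ∑' k : ℕ,
      (P {ω | ∃ t : ℕ, (1 ≤ t ∧ ∀ i < t, S t ω < S i ω) ∧
          Set.ncard {s : ℕ | 1 ≤ s ∧ s ≤ t ∧ ∀ i < s, S s ω < S i ω} = k + 1 ∧
          -(S t ω) ≤ x}).toReal)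
    (x : ℝ) (hx : 0 ≤ x) :
    V x ≤ liminf (fun n : ℕ =>
        (P {ω | ∀ k ≤ n, 0 ≤ x + S k ω}).toReal / (P {ω | ∀ k ≤ n, 0 ≤ S k ω}).toReal)
      atTop := by
  classical
  -- basic facts about S
  have hS0 : ∀ ω, S 0 ω = 0 := fun ω => by rw [hS]; simp
  have hpsum : ∀ (ω : Ω) (r : ℕ), psum (fun i => X i ω) r = S r ω := fun ω r => by
    rw [hS r ω]; rfl
  have hpsum_tr : ∀ (t : ℕ) (ω : Ω), ∀ r ≤ t,
      psum (fun j => if j < t then X j ω else 0) r = S r ω := by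
    intro t ω r hr
    rw [← hpsum ω r]
    exact psum_congr (fun i hi => by rw [if_pos (lt_of_lt_of_le hi hr)])
  have hpsum_sh : ∀ (t n : ℕ) (ω : Ω), ∀ r ≤ n,
      psum (fun j => if j < n then X (t + j) ω else 0) r
        = ∑ i ∈ Finset.range r, X (t + i) ω := by
    intro t n ω r hr
    rw [show (∑ i ∈ Finset.range r, X (t + i) ω) = psum (fun i => X (t + i) ω) r from rfl]
    exact psum_congr (fun i hi => by rw [if_pos (lt_of_lt_of_le hi hr)])
  have hshiftS : ∀ (t r : ℕ) (ω : Ω),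
      S (t + r) ω = S t ω + ∑ i ∈ Finset.range r, X (t + i) ω := by
    intro t r ω; rw [hS, hS, Finset.sum_range_add]
  have hSmono : ∀ (t t' n : ℕ) (ω : Ω), t ≤ t' → t' - t ≤ n →
      (∀ j ≤ n, 0 ≤ ∑ i ∈ Finset.range j, X (t + i) ω) → S t ω ≤ S t' ω := by
    intro t t' n ω htt' hsub hB
    have h1 := hB (t' - t) hsub
    have h2 := hshiftS t (t' - t) ω
    rw [Nat.add_sub_cancel' htt'] at h2
    linarith
  -- events
  set AS : ℕ → ℕ → Set Ω := fun k t => {ω | (1 ≤ t ∧ ∀ i < t, S t ω < S i ω) ∧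
      Set.ncard {s : ℕ | 1 ≤ s ∧ s ≤ t ∧ ∀ i < s, S s ω < S i ω} = k + 1 ∧ -(S t ω) ≤ x}
    with hAS_def
  set BBS : ℕ → ℕ → Set Ω := fun t n => {ω | ∀ j ≤ n, 0 ≤ ∑ i ∈ Finset.range j, X (t + i) ω}
    with hBBS_def
  set Den : ℕ → Set Ω := fun n => {ω | ∀ k ≤ n, 0 ≤ S k ω} with hDen_def
  set Num : ℕ → Set Ω := fun n => {ω | ∀ k ≤ n, 0 ≤ x + S k ω} with hNum_def
  -- preimage descriptions
  have hAA_eq : ∀ k t, (fun ω (j : ℕ) => if j < t then X j ω else 0) ⁻¹' RWren.DA t k x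
      = AS k t := by
    intro k t
    ext ω
    rw [Set.mem_preimage, mem_DA_iff (fun r hr => hpsum_tr t ω r hr)]
    simp only [hAS_def, Set.mem_setOf_eq]
  have hBB_eq : ∀ t n, (fun ω (j : ℕ) => if j < n then X (t + j) ω else 0) ⁻¹' RWren.DB 0 n
      = BBS t n := by
    intro t n
    ext ω
    rw [Set.mem_preimage, mem_DB_iff (fun r hr => hpsum_sh t n ω r hr)]
    simp only [hBBS_def, Set.mem_setOf_eq, zero_add]
  have hsh0 : ∀ (n : ℕ) (ω : Ω), ∀ r ≤ n,
      psum (fun j => if j < n then X (0 + j) ω else 0) r = S r ω := by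
    intro n ω r hr
    rw [← hpsum ω r]
    exact psum_congr (fun i hi => by rw [if_pos (lt_of_lt_of_le hi hr), Nat.zero_add])
  have hDen_eq : ∀ n, (fun ω (j : ℕ) => if j < n then X (0 + j) ω else 0) ⁻¹' RWren.DB 0 n
      = Den n := by
    intro n
    ext ω
    rw [Set.mem_preimage, mem_DB_iff (fun r hr => hsh0 n ω r hr)]
    simp only [hDen_def, Set.mem_setOf_eq, zero_add]
  have hNum_eq : ∀ n, (fun ω (j : ℕ) => if j < n then X (0 + j) ω else 0) ⁻¹' RWren.DB x n
      = Num n := by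
    intro n
    ext ω
    rw [Set.mem_preimage, mem_DB_iff (fun r hr => hsh0 n ω r hr)]
    simp only [hNum_def, Set.mem_setOf_eq]
  -- measurability
  have hASmeas : ∀ k t, MeasurableSet (AS k t) := fun k t =>
    hAA_eq k t ▸ (measurable_truncX hmeas t) (measurable_DA t k x)
  have hBBSmeas : ∀ t n, MeasurableSet (BBS t n) := fun t n =>
    hBB_eq t n ▸ (measurable_shiftX hmeas t n) (measurable_DB 0 n)
  have hDenmeas : ∀ n, MeasurableSet (Den n) := fun n =>
    hDen_eq n ▸ (measurable_shiftX hmeas 0 n) (measurable_DB 0 n)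
  have hNummeas : ∀ n, MeasurableSet (Num n) := fun n =>
    hNum_eq n ▸ (measurable_shiftX hmeas 0 n) (measurable_DB x n)
  -- key measure identities
  have hPBBS : ∀ t n, P (BBS t n) = P (Den n) := by
    intro t n
    rw [← hBB_eq t n, ← hDen_eq n]
    exact prob_shift hmeas hindep hid (measurable_DB 0 n) t n
  have hindepAB : ∀ k t n, P (AS k t ∩ BBS t n) = P (AS k t) * P (BBS t n) := by
    intro k t n
    rw [← hAA_eq k t, ← hBB_eq t n]
    exact (indep_trunc hmeas hindep t n).measure_inter_preimage_eq_mul _ _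
      (measurable_DA t k x) (measurable_DB 0 n)
  -- combinatorics
  have hcnt_mono : ∀ (ω : Ω) (t t' : ℕ), t < t' → 1 ≤ t' → (∀ i < t', S t' ω < S i ω) →
      Set.ncard {s : ℕ | 1 ≤ s ∧ s ≤ t ∧ ∀ i < s, S s ω < S i ω}
        < Set.ncard {s : ℕ | 1 ≤ s ∧ s ≤ t' ∧ ∀ i < s, S s ω < S i ω} := by
    intro ω t t' htt' h1 hlad
    apply Set.ncard_lt_ncard
    · constructor
      · intro s hs; exact ⟨hs.1, le_trans hs.2.1 (le_of_lt htt'), hs.2.2⟩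
      · intro hsub
        have ht' : t' ∈ {s : ℕ | 1 ≤ s ∧ s ≤ t ∧ ∀ i < s, S s ω < S i ω} :=
          hsub ⟨h1, le_rfl, hlad⟩
        have := ht'.2.1
        omega
    · exact (Set.finite_Icc 1 t').subset (fun s hs => Set.mem_Icc.2 ⟨hs.1, hs.2.1⟩)
  have hdisj_t : ∀ k t t', t < t' → Disjoint (AS k t) (AS k t') := by
    intro k t t' htt'
    rw [Set.disjoint_left]
    intro ω hω hω'
    simp only [hAS_def, Set.mem_setOf_eq] at hω hω'
    have := hcnt_mono ω t t' htt' hω'.1.1 hω'.1.2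
    have e1 := hω.2.1
    have e2 := hω'.2.1
    omega
  have hdisj_G : ∀ n m, m ≤ n → ∀ (k t k' t' : ℕ), t ≤ m → t' ≤ m → (k, t) ≠ (k', t') →
      Disjoint (AS k t ∩ BBS t n) (AS k' t' ∩ BBS t' n) := by
    intro n m hmn k t k' t' htm ht'm hne
    rw [Set.disjoint_left]
    rintro ω ⟨hA, hB⟩ ⟨hA', hB'⟩
    simp only [hAS_def, Set.mem_setOf_eq] at hA hA'
    simp only [hBBS_def, Set.mem_setOf_eq] at hB hB'
    rcases Nat.lt_trichotomy t t' with h | h | h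
    · have h1 : S t ω ≤ S t' ω := hSmono t t' n ω (le_of_lt h) (by omega) hB
      have h2 : S t' ω < S t ω := hA'.1.2 t h
      linarith
    · subst h
      have e1 := hA.2.1
      have e2 := hA'.2.1
      exact hne (by rw [show k = k' by omega])
    · have h1 : S t' ω ≤ S t ω := hSmono t' t n ω (le_of_lt h) (by omega) hB'
      have h2 : S t ω < S t' ω := hA.1.2 t' h
      linarith
  have hdisj_D : ∀ n k t, t ≤ n → Disjoint (Den n) (AS k t ∩ BBS t n) := by
    intro n k t htn
    rw [Set.disjoint_left]
    rintro ω hD ⟨hA, _⟩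
    simp only [hAS_def, Set.mem_setOf_eq] at hA
    simp only [hDen_def, Set.mem_setOf_eq] at hD
    have h1 : S t ω < S 0 ω := hA.1.2 0 hA.1.1
    have h2 : 0 ≤ S t ω := hD t htn
    rw [hS0 ω] at h1
    linarith
  have hsub_DN : ∀ n, Den n ⊆ Num n := by
    intro n ω hω
    simp only [hDen_def, Set.mem_setOf_eq] at hω
    simp only [hNum_def, Set.mem_setOf_eq]
    intro k hk
    have := hω k hk
    linarith
  have hsub_GN : ∀ n k t, t ≤ n → AS k t ∩ BBS t n ⊆ Num n := by
    rintro n k t htn ω ⟨hA, hB⟩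
    simp only [hAS_def, Set.mem_setOf_eq] at hA
    simp only [hBBS_def, Set.mem_setOf_eq] at hB
    simp only [hNum_def, Set.mem_setOf_eq]
    intro j hj
    have h2 : 0 ≤ x + S t ω := by linarith [hA.2.2]
    rcases lt_or_ge j t with hjt | hjt
    · have h1 : S t ω < S j ω := hA.1.2 j hjt
      linarith
    · have h1 : S t ω ≤ S j ω := hSmono t j n ω hjt (by omega) hB
      linarith
  -- the main inequality
  have hmain : ∀ K m n, m ≤ n →
      P (Den n) * (1 + ∑ p ∈ Finset.range K ×ˢ Finset.range (m+1), P (AS p.1 p.2))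
        ≤ P (Num n) := by
    intro K m n hmn
    have hGdisj : (↑(Finset.range K ×ˢ Finset.range (m+1)) : Set (ℕ × ℕ)).PairwiseDisjoint
        (fun p : ℕ × ℕ => AS p.1 p.2 ∩ BBS p.2 n) := by
      rintro ⟨k, t⟩ hp ⟨k', t'⟩ hq hne
      simp only [Finset.coe_product, Set.mem_prod, Finset.mem_coe, Finset.mem_range] at hp hq
      exact hdisj_G n m hmn k t k' t' (by omega) (by omega) hne
    have hUeq : P (⋃ p ∈ Finset.range K ×ˢ Finset.range (m+1), (AS p.1 p.2 ∩ BBS p.2 n))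
        = ∑ p ∈ Finset.range K ×ˢ Finset.range (m+1), P (AS p.1 p.2 ∩ BBS p.2 n) :=
      measure_biUnion_finset hGdisj (fun p _ => (hASmeas p.1 p.2).inter (hBBSmeas p.2 n))
    have hDisjD : Disjoint (Den n)
        (⋃ p ∈ Finset.range K ×ˢ Finset.range (m+1), (AS p.1 p.2 ∩ BBS p.2 n)) := by
      rw [Set.disjoint_left]
      intro ω hω hω'
      rw [Set.mem_iUnion₂] at hω'
      obtain ⟨p, hpF, hωp⟩ := hω'
      have hp2 : p.2 ≤ n := by
        simp only [Finset.mem_product, Finset.mem_range] at hpF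
        omega
      exact Set.disjoint_left.1 (hdisj_D n p.1 p.2 hp2) hω hωp
    calc P (Den n) * (1 + ∑ p ∈ Finset.range K ×ˢ Finset.range (m+1), P (AS p.1 p.2))
        = P (Den n) + ∑ p ∈ Finset.range K ×ˢ Finset.range (m+1),
            P (AS p.1 p.2) * P (Den n) := by
          rw [mul_add, mul_one, Finset.mul_sum]
          congr 1
          exact Finset.sum_congr rfl fun p _ => mul_comm _ _
      _ = P (Den n) + ∑ p ∈ Finset.range K ×ˢ Finset.range (m+1),
            P (AS p.1 p.2 ∩ BBS p.2 n) := by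
          congr 1
          exact Finset.sum_congr rfl fun p _ => by rw [hindepAB, hPBBS]
      _ = P (Den n ∪ ⋃ p ∈ Finset.range K ×ˢ Finset.range (m+1), (AS p.1 p.2 ∩ BBS p.2 n)) := by
          rw [measure_union hDisjD (Finset.measurableSet_biUnion _
            (fun p _ => (hASmeas p.1 p.2).inter (hBBSmeas p.2 n))), hUeq]
      _ ≤ P (Num n) := by
          apply measure_mono
          intro ω hω
          rcases hω with h | h
          · exact hsub_DN n h
          · rw [Set.mem_iUnion₂] at h
            obtain ⟨p, hpF, hωp⟩ := h
            have hp2 : p.2 ≤ n := by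
              simp only [Finset.mem_product, Finset.mem_range] at hpF
              omega
            exact hsub_GN n p.1 p.2 hp2 hωp
  -- marginal identity
  have hmarg : ∀ (i : ℕ) (c : ℝ), P (X i ⁻¹' Set.Ici c) = P (X 0 ⁻¹' Set.Ici c) := by
    intro i c
    rw [← Measure.map_apply (hmeas i) measurableSet_Ici, hid i,
      Measure.map_apply (hmeas 0) measurableSet_Ici]
  by_cases hdeg : ∀ᵐ ω ∂P, X 0 ω = 0
  · -- degenerate case: the walk is a.s. constant zero
    have hzero : ∀ᵐ ω ∂P, ∀ i, X i ω = 0 := by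
      rw [MeasureTheory.ae_all_iff]
      intro i
      rw [ae_iff]
      have h0 : P {ω | ¬ X 0 ω = 0} = 0 := by rw [← ae_iff]; exact hdeg
      have hmap : P (X i ⁻¹' {(0:ℝ)}ᶜ) = P (X 0 ⁻¹' {(0:ℝ)}ᶜ) := by
        rw [← Measure.map_apply (hmeas i) (measurableSet_singleton (0:ℝ)).compl, hid i,
          Measure.map_apply (hmeas 0) (measurableSet_singleton (0:ℝ)).compl]
      have he : ∀ (j : ℕ), X j ⁻¹' {(0:ℝ)}ᶜ = {ω | ¬ X j ω = 0} := by
        intro j; ext ω; simp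
      rw [← he i, hmap, he 0, h0]
    have hSznull : P {ω | ¬ ∀ r, S r ω = 0} = 0 := by
      rw [← ae_iff]
      exact hzero.mono fun ω h r => by
        rw [hS]; exact Finset.sum_eq_zero fun i _ => h i
    have hnum : ∀ n, P (Num n) = 1 := by
      intro n
      rw [← prob_compl_eq_zero_iff (hNummeas n)]
      apply measure_mono_null _ hSznull
      intro ω hω
      simp only [Set.mem_compl_iff, hNum_def, Set.mem_setOf_eq] at hω
      simp only [Set.mem_setOf_eq]
      intro hall
      apply hω
      intro k _
      rw [hall k]
      linarith
    have hden : ∀ n, P (Den n) = 1 := by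
      intro n
      rw [← prob_compl_eq_zero_iff (hDenmeas n)]
      apply measure_mono_null _ hSznull
      intro ω hω
      simp only [Set.mem_compl_iff, hDen_def, Set.mem_setOf_eq] at hω
      simp only [Set.mem_setOf_eq]
      intro hall
      apply hω
      intro k _
      rw [hall k]
    have hconst : (fun n : ℕ =>
        (P {ω | ∀ k ≤ n, 0 ≤ x + S k ω}).toReal / (P {ω | ∀ k ≤ n, 0 ≤ S k ω}).toReal)
        = fun _ : ℕ => (1 : ℝ) := by
      funext n
      have h1 : P {ω | ∀ k ≤ n, 0 ≤ x + S k ω} = 1 := hnum n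
      have h2 : P {ω | ∀ k ≤ n, 0 ≤ S k ω} = 1 := hden n
      rw [h1, h2]
      simp
    rw [hconst, liminf_const]
    have hterm : ∀ k : ℕ, P {ω | ∃ t : ℕ, (1 ≤ t ∧ ∀ i < t, S t ω < S i ω) ∧
        Set.ncard {s : ℕ | 1 ≤ s ∧ s ≤ t ∧ ∀ i < s, S s ω < S i ω} = k + 1 ∧
        -(S t ω) ≤ x} = 0 := by
      intro k
      apply measure_mono_null _ hSznull
      rintro ω ⟨t, ⟨⟨h1, h2⟩, _⟩⟩
      simp only [Set.mem_setOf_eq]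
      intro hall
      have := h2 0 h1
      rw [hall t, hall 0] at this
      linarith
    rw [hV x]
    simp only [hterm]
    simp
  · -- generic case
    have hda : ∃ δ : ℝ, 0 < δ ∧ P (X 0 ⁻¹' Set.Ici δ) ≠ 0 := by
      by_contra hcon
      push_neg at hcon
      apply hdeg
      have hpos0 : P {ω | 0 < X 0 ω} = 0 := by
        have hcover : {ω | 0 < X 0 ω} = ⋃ m : ℕ, X 0 ⁻¹' Set.Ici (1/((m:ℝ)+1)) := by
          ext ω
          simp only [Set.mem_setOf_eq, Set.mem_iUnion, Set.mem_preimage, Set.mem_Ici]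
          constructor
          · intro h
            obtain ⟨m, hm⟩ := exists_nat_one_div_lt h
            exact ⟨m, le_of_lt hm⟩
          · rintro ⟨m, hm⟩
            have : (0:ℝ) < 1/((m:ℝ)+1) := by positivity
            linarith
        rw [hcover]
        exact measure_iUnion_null fun m => hcon _ (by positivity)
      have h2 : ∀ᵐ ω ∂P, X 0 ω ≤ 0 := by
        rw [ae_iff]
        have he2 : {ω | ¬ X 0 ω ≤ 0} = {ω | 0 < X 0 ω} := by
          ext ω; simp [not_le]
        rw [he2]
        exact hpos0
      have hle : 0 ≤ᵐ[P] fun ω => -X 0 ω := h2.mono fun ω h => by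
        simp only [Pi.zero_apply]
        linarith
      have hzero' : ∫ ω, -X 0 ω ∂P = 0 := by rw [integral_neg, hmean, neg_zero]
      have := (integral_eq_zero_iff_of_nonneg_ae hle hint.neg).1 hzero'
      exact this.mono fun ω h => by
        have : -X 0 ω = 0 := h
        linarith
    obtain ⟨δ, hδ, hδpos⟩ := hda
    have hIci0 : P (X 0 ⁻¹' Set.Ici (0:ℝ)) ≠ 0 := by
      intro h0
      exact hδpos (measure_mono_null (fun ω h => le_trans (le_of_lt hδ) h) h0)
    have hDenpos : ∀ n, P (Den n) ≠ 0 := by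
      intro n
      have hsub0 : (⋂ i ∈ Finset.range n, X i ⁻¹' Set.Ici (0:ℝ)) ⊆ Den n := by
        intro ω hω
        simp only [Set.mem_iInter, Set.mem_preimage, Set.mem_Ici, Finset.mem_range] at hω
        simp only [hDen_def, Set.mem_setOf_eq]
        intro k hk
        rw [hS]
        exact Finset.sum_nonneg fun i hi => hω i (by rw [Finset.mem_range] at hi; omega)
      intro hDen0
      have h1 : P (⋂ i ∈ Finset.range n, X i ⁻¹' Set.Ici (0:ℝ)) = 0 :=
        measure_mono_null hsub0 hDen0
      rw [hindep.measure_inter_preimage_eq_mul (Finset.range n)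
        (fun i _ => measurableSet_Ici)] at h1
      rw [Finset.prod_congr rfl (fun i _ => hmarg i 0), Finset.prod_const,
        Finset.card_range] at h1
      rcases Nat.eq_zero_or_pos n with hn | hn
      · rw [hn, pow_zero] at h1
        exact one_ne_zero h1
      · exact hIci0 ((pow_eq_zero_iff (by omega)).1 h1)
    -- the ratio bound
    have hratio : ∀ K m n, m ≤ n →
        1 + ∑ p ∈ Finset.range K ×ˢ Finset.range (m+1), (P (AS p.1 p.2)).toReal
          ≤ (P {ω | ∀ k ≤ n, 0 ≤ x + S k ω}).toReal / (P {ω | ∀ k ≤ n, 0 ≤ S k ω}).toReal := by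
      intro K m n hmn
      show _ ≤ (P (Num n)).toReal / (P (Den n)).toReal
      have hb : 0 < (P (Den n)).toReal :=
        ENNReal.toReal_pos (hDenpos n) (measure_ne_top P _)
      rw [le_div_iff₀ hb]
      have h2 : ((P (Den n)) * (1 + ∑ p ∈ Finset.range K ×ˢ Finset.range (m+1),
          P (AS p.1 p.2))).toReal ≤ (P (Num n)).toReal :=
        ENNReal.toReal_mono (measure_ne_top P _) (hmain K m n hmn)
      rw [ENNReal.toReal_mul, ENNReal.toReal_add ENNReal.one_ne_top
        ((ENNReal.sum_ne_top).2 fun p _ => measure_ne_top P _), ENNReal.toReal_one,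
        ENNReal.toReal_sum (fun p _ => measure_ne_top P _)] at h2
      rw [mul_comm] at h2
      exact h2
    -- upper bound on the ratio, for coboundedness
    set N : ℕ := Nat.ceil (x / δ) with hNdef
    have hNx : x ≤ (N : ℝ) * δ := by
      have h1 := Nat.le_ceil (x / δ)
      rw [div_le_iff₀ hδ] at h1
      exact h1
    have hCC_eq : (fun ω (j : ℕ) => if j < N then X j ω else 0) ⁻¹' RWren.DC N x
        = {ω | (∀ j ≤ N, 0 ≤ S j ω) ∧ x ≤ S N ω} := by
      ext ω
      rw [Set.mem_preimage, mem_DC_iff (fun r hr => hpsum_tr N ω r hr)]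
      simp only [Set.mem_setOf_eq]
    have hCCpos : P ((fun ω (j : ℕ) => if j < N then X j ω else 0) ⁻¹' RWren.DC N x) ≠ 0 := by
      have hsubC : (⋂ i ∈ Finset.range N, X i ⁻¹' Set.Ici δ)
          ⊆ (fun ω (j : ℕ) => if j < N then X j ω else 0) ⁻¹' RWren.DC N x := by
        intro ω hω
        simp only [Set.mem_iInter, Set.mem_preimage, Set.mem_Ici, Finset.mem_range] at hω
        rw [hCC_eq]
        constructor
        · intro j hj
          rw [hS]
          exact Finset.sum_nonneg fun i hi => le_trans (le_of_lt hδ)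
            (hω i (by rw [Finset.mem_range] at hi; omega))
        · rw [hS]
          calc x ≤ (N : ℝ) * δ := hNx
            _ = ∑ _i ∈ Finset.range N, δ := by
                rw [Finset.sum_const, Finset.card_range, nsmul_eq_mul]
            _ ≤ ∑ i ∈ Finset.range N, X i ω :=
                Finset.sum_le_sum fun i hi => hω i (Finset.mem_range.1 hi)
      intro h0
      have h1 : P (⋂ i ∈ Finset.range N, X i ⁻¹' Set.Ici δ) = 0 :=
        measure_mono_null hsubC h0
      rw [hindep.measure_inter_preimage_eq_mul (Finset.range N)
        (fun i _ => measurableSet_Ici)] at h1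
      rw [Finset.prod_congr rfl (fun i _ => hmarg i δ), Finset.prod_const,
        Finset.card_range] at h1
      exact pow_ne_zero N hδpos h1
    have hub : ∀ n, P (Num n)
        * P ((fun ω (j : ℕ) => if j < N then X j ω else 0) ⁻¹' RWren.DC N x)
        ≤ P (Den n) := by
      intro n
      have h1 := (indep_trunc hmeas hindep N n).measure_inter_preimage_eq_mul
        (RWren.DC N x) (RWren.DB x n) (measurable_DC N x) (measurable_DB x n)
      have h2 : P ((fun ω (j : ℕ) => if j < n then X (N + j) ω else 0) ⁻¹' RWren.DB x n)
          = P (Num n) := by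
        rw [← hNum_eq n]
        exact prob_shift hmeas hindep hid (measurable_DB x n) N n
      have h3 : ((fun ω (j : ℕ) => if j < N then X j ω else 0) ⁻¹' RWren.DC N x)
          ∩ ((fun ω (j : ℕ) => if j < n then X (N + j) ω else 0) ⁻¹' RWren.DB x n)
          ⊆ Den n := by
        rintro ω ⟨hC, hB⟩
        rw [hCC_eq] at hC
        rw [Set.mem_preimage, mem_DB_iff (fun r hr => hpsum_sh N n ω r hr)] at hB
        simp only [Set.mem_setOf_eq] at hC
        simp only [hDen_def, Set.mem_setOf_eq]
        intro k hk
        rcases le_or_gt k N with h | h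
        · exact hC.1 k h
        · have hkN : k - N ≤ n := by omega
          have hBk := hB (k - N) hkN
          have heq := hshiftS N (k - N) ω
          rw [Nat.add_sub_cancel' (le_of_lt h)] at heq
          have := hC.2
          linarith
      calc P (Num n) * P ((fun ω (j : ℕ) => if j < N then X j ω else 0) ⁻¹' RWren.DC N x)
          = P ((fun ω (j : ℕ) => if j < N then X j ω else 0) ⁻¹' RWren.DC N x)
            * P ((fun ω (j : ℕ) => if j < n then X (N + j) ω else 0) ⁻¹' RWren.DB x n) := by
            rw [h2, mul_comm]
        _ = P (((fun ω (j : ℕ) => if j < N then X j ω else 0) ⁻¹' RWren.DC N x)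
            ∩ ((fun ω (j : ℕ) => if j < n then X (N + j) ω else 0) ⁻¹' RWren.DB x n)) :=
            h1.symm
        _ ≤ P (Den n) := measure_mono h3
    have hcobound : IsCoboundedUnder (· ≥ ·) atTop (fun n : ℕ =>
        (P {ω | ∀ k ≤ n, 0 ≤ x + S k ω}).toReal / (P {ω | ∀ k ≤ n, 0 ≤ S k ω}).toReal) := by
      apply Filter.isCoboundedUnder_ge_of_le atTop
        (x := 1 / (P ((fun ω (j : ℕ) => if j < N then X j ω else 0) ⁻¹' RWren.DC N x)).toReal)
      intro n
      show (P (Num n)).toReal / (P (Den n)).toReal ≤ _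
      have hbpos : 0 < (P (Den n)).toReal :=
        ENNReal.toReal_pos (hDenpos n) (measure_ne_top P _)
      have hcpos : 0 <
          (P ((fun ω (j : ℕ) => if j < N then X j ω else 0) ⁻¹' RWren.DC N x)).toReal :=
        ENNReal.toReal_pos hCCpos (measure_ne_top P _)
      rw [div_le_div_iff₀ hbpos hcpos]
      have h1 := ENNReal.toReal_mono (measure_ne_top P (Den n)) (hub n)
      rw [ENNReal.toReal_mul] at h1
      linarith
    -- liminf lower bounds
    have hlim : ∀ K m,
        1 + ∑ p ∈ Finset.range K ×ˢ Finset.range (m+1), (P (AS p.1 p.2)).toReal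
          ≤ liminf (fun n : ℕ =>
            (P {ω | ∀ k ≤ n, 0 ≤ x + S k ω}).toReal / (P {ω | ∀ k ≤ n, 0 ≤ S k ω}).toReal)
            atTop := by
      intro K m
      apply Filter.le_liminf_of_le hcobound
      filter_upwards [Filter.eventually_ge_atTop m] with n hn
      exact hratio K m n hn
    -- pass to the limit in m, then in K
    have hstmt : ∀ k : ℕ, {ω | ∃ t : ℕ, (1 ≤ t ∧ ∀ i < t, S t ω < S i ω) ∧
        Set.ncard {s : ℕ | 1 ≤ s ∧ s ≤ t ∧ ∀ i < s, S s ω < S i ω} = k + 1 ∧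
        -(S t ω) ≤ x} = ⋃ t, AS k t := by
      intro k
      rw [Set.setOf_exists]
    rw [hV x]
    simp only [hstmt]
    have hsum_m : ∀ k m, ∑ t ∈ Finset.range (m+1), P (AS k t)
        = P (⋃ t ∈ Finset.range (m+1), AS k t) := by
      intro k m
      refine (measure_biUnion_finset ?_ (fun t _ => hASmeas k t)).symm
      intro t _ t' _ hne
      rcases Nat.lt_or_ge t t' with h | h
      · exact hdisj_t k t t' h
      · exact (hdisj_t k t' t (by omega)).symm
    have htmono : ∀ k, Monotone (fun m => ⋃ t ∈ Finset.range (m+1), AS k t) := by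
      intro k a b hab
      exact Set.biUnion_subset_biUnion_left (Finset.range_subset_range.2 (by omega))
    have hUnionAS : ∀ k, (⋃ m, ⋃ t ∈ Finset.range (m+1), AS k t) = ⋃ t, AS k t := by
      intro k
      ext ω
      simp only [Set.mem_iUnion, Finset.mem_range]
      constructor
      · rintro ⟨m, t, _, h⟩
        exact ⟨t, h⟩
      · rintro ⟨t, h⟩
        exact ⟨t, t, by omega, h⟩
    have htendm : ∀ k, Tendsto
        (fun m => ∑ t ∈ Finset.range (m+1), (P (AS k t)).toReal) atTop
        (𝓝 ((P (⋃ t, AS k t)).toReal)) := by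
      intro k
      have h1 : Tendsto (fun m => P (⋃ t ∈ Finset.range (m+1), AS k t)) atTop
          (𝓝 (P (⋃ t, AS k t))) := by
        have h2 := tendsto_measure_iUnion_atTop (μ := P) (htmono k)
        rwa [hUnionAS k] at h2
      have h3 := (ENNReal.tendsto_toReal (measure_ne_top P _)).comp h1
      refine h3.congr fun m => ?_
      show (P (⋃ t ∈ Finset.range (m+1), AS k t)).toReal = _
      rw [← hsum_m k m, ENNReal.toReal_sum (fun t _ => measure_ne_top P _)]
    have hKbound : ∀ K, 1 + ∑ k ∈ Finset.range K, (P (⋃ t, AS k t)).toReal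
        ≤ liminf (fun n : ℕ =>
            (P {ω | ∀ k ≤ n, 0 ≤ x + S k ω}).toReal / (P {ω | ∀ k ≤ n, 0 ≤ S k ω}).toReal)
            atTop := by
      intro K
      have h1 : Tendsto (fun m => 1 + ∑ k ∈ Finset.range K,
          ∑ t ∈ Finset.range (m+1), (P (AS k t)).toReal) atTop
          (𝓝 (1 + ∑ k ∈ Finset.range K, (P (⋃ t, AS k t)).toReal)) :=
        tendsto_const_nhds.add (tendsto_finset_sum _ fun k _ => htendm k)
      refine le_of_tendsto h1 (Eventually.of_forall fun m => ?_)
      have h2 := hlim K m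
      rwa [Finset.sum_product] at h2
    by_cases hsumm : Summable (fun k => (P (⋃ t, AS k t)).toReal)
    · have h1 : Tendsto (fun K => 1 + ∑ k ∈ Finset.range K, (P (⋃ t, AS k t)).toReal) atTop
          (𝓝 (1 + ∑' k, (P (⋃ t, AS k t)).toReal)) :=
        tendsto_const_nhds.add hsumm.hasSum.tendsto_sum_nat
      exact le_of_tendsto h1 (Eventually.of_forall hKbound)
    · rw [tsum_eq_zero_of_not_summable hsumm]
      have h0 := hKbound 0
      simpa using h0
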